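/- Let R be the multivariate polynomial ring over ℤ[z] in the variables a, b_0, b_1, b_2, …, and for each integer m ≥ 1 let D_m be the unique ℤ[z]-linear derivation of R satisfying D_m(a) = (m−1)(m−1+z)·a and D_m(b_j) = b_{j+1} for every j ≥ 0. Then for every n ≥ 1, (D_n ∘ D_{n−1} ∘ ⋯ ∘ D_1)(a·b_0) = a · Σ_{k=1}^{n} Jc_n^k(z) · b_k. -/
import Mathlib


open MvPolynomial

/-- The (unsigned) Jacobi-Stirling numbers of the first kind `Jc_n^k(z)`,
as polynomials in `ℤ[z]`. -/
noncomputable def Jc : ℕ → ℕ → Polynomial ℤ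
  | 0, 0 => 1
  | 0, _ + 1 => 0
  | _ + 1, 0 => 0
  | n + 1, k + 1 =>
      Jc n k + Polynomial.C (n : ℤ) * (Polynomial.C (n : ℤ) + Polynomial.X) * Jc n (k + 1)

/-- The variables `a, b₀, b₁, b₂, …`. -/
inductive HVar where
  | a : HVar
  | b : ℕ → HVar

/-- `applyChain F n x = (F n ∘ F (n−1) ∘ ⋯ ∘ F 1) x`. -/
def applyChain {R : Type*} (F : ℕ → R → R) : ℕ → R → R
  | 0, x => x
  | n + 1, x => F (n + 1) (applyChain F n x)

lemma Jc_succ_succ (n k : ℕ) : Jc (n+1) (k+1) = Jc n k + Polynomial.C (n : ℤ) * (Polynomial.C (n : ℤ) + Polynomial.X) * Jc n (k + 1) := rfl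

lemma Jc_eq_zero_of_lt : ∀ n k, n < k → Jc n k = 0 := by
  intro n
  induction n with
  | zero => intro k h; cases k with | zero => omega | succ k => rfl
  | succ n ih =>
    intro k h
    cases k with
    | zero => omega
    | succ k => rw [Jc_succ_succ, ih k (by omega), ih (k+1) (by omega)]; ring

lemma Jc_pos_zero (n : ℕ) (h : 1 ≤ n) : Jc n 0 = 0 := by
  cases n with
  | zero => omega
  | succ n => rfl

lemma sum_Icc_one (M : Type*) [AddCommMonoid M] (f : ℕ → M) :
    ∀ m : ℕ, ∑ k ∈ Finset.Icc 1 m, f k = ∑ i ∈ Finset.range m, f (i + 1) := by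
  intro m
  induction m with
  | zero => simp
  | succ m ih =>
    rw [Finset.sum_Icc_succ_top (by omega), ih, Finset.sum_range_succ]

/-- If for each `m ≥ 1`, `D m` is a `ℤ[z]`-linear derivation of `ℤ[z][a, b₀, b₁, …]`
with `D m (a) = (m−1)(m−1+z)·a` and `D m (bⱼ) = b_{j+1}`, then
`(D n ∘ D (n−1) ∘ ⋯ ∘ D 1)(a b₀) = a Σ_{k=1}^{n} Jcₙᵏ(z) b_k`. -/
theorem grammar_Jc
    (D : ℕ → Derivation (Polynomial ℤ) (MvPolynomial HVar (Polynomial ℤ))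
      (MvPolynomial HVar (Polynomial ℤ)))
    (ha : ∀ m : ℕ, 1 ≤ m →
      (D m) (X HVar.a) =
        C (((m : Polynomial ℤ) - 1) * ((m : Polynomial ℤ) - 1 + Polynomial.X)) * X HVar.a)
    (hb : ∀ m : ℕ, 1 ≤ m → ∀ j : ℕ, (D m) (X (HVar.b j)) = X (HVar.b (j + 1))) :
    ∀ n : ℕ, 1 ≤ n →
      applyChain (fun m p => (D m) p) n (X HVar.a * X (HVar.b 0)) =
        X HVar.a * ∑ k ∈ Finset.Icc 1 n, C (Jc n k) * X (HVar.b k) := by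
  intro n hn
  induction n with
  | zero => omega
  | succ n ih =>
    rcases Nat.eq_zero_or_pos n with rfl | hn1
    · -- base case n = 1
      show (D 1) (X HVar.a * X (HVar.b 0)) = _
      rw [Derivation.leibniz, ha 1 le_rfl, hb 1 le_rfl 0]
      simp [Jc_succ_succ, Jc, smul_eq_mul]
    · -- inductive step
      show (D (n+1)) (applyChain _ n (X HVar.a * X (HVar.b 0))) = _
      rw [ih hn1, Derivation.leibniz, ha (n+1) (by omega), map_sum]
      have hD : ∀ k, (D (n+1)) (C (Jc n k) * X (HVar.b k))
          = C (Jc n k) * X (HVar.b (k+1)) := by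
        intro k
        rw [← smul_eq_C_mul, Derivation.map_smul, hb (n+1) (by omega) k, smul_eq_C_mul]
      simp only [hD]
      -- key sum identity
      have key : (∑ k ∈ Finset.Icc 1 (n+1), C (Jc (n+1) k) * X (HVar.b k) :
            MvPolynomial HVar (Polynomial ℤ))
          = C (Polynomial.C (n : ℤ) * (Polynomial.C (n : ℤ) + Polynomial.X)) *
              ∑ k ∈ Finset.Icc 1 n, C (Jc n k) * X (HVar.b k)
            + ∑ k ∈ Finset.Icc 1 n, C (Jc n k) * X (HVar.b (k+1)) := by
        rw [sum_Icc_one, sum_Icc_one, sum_Icc_one]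
        have e1 : ∀ i : ℕ, (C (Jc (n+1) (i+1)) * X (HVar.b (i+1)) :
              MvPolynomial HVar (Polynomial ℤ))
            = C (Jc n i) * X (HVar.b (i+1))
              + C (Polynomial.C (n : ℤ) * (Polynomial.C (n : ℤ) + Polynomial.X)) *
                (C (Jc n (i+1)) * X (HVar.b (i+1))) := by
          intro i
          rw [Jc_succ_succ, map_add, add_mul, map_mul]
          ring
        rw [Finset.sum_congr rfl (fun i _ => e1 i), Finset.sum_add_distrib]
        have hA : (∑ i ∈ Finset.range (n+1), C (Jc n i) * X (HVar.b (i+1)) :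
              MvPolynomial HVar (Polynomial ℤ))
            = ∑ i ∈ Finset.range n, C (Jc n (i+1)) * X (HVar.b (i+1+1)) := by
          rw [Finset.sum_range_succ', Jc_pos_zero n hn1]
          simp
        have hB : (∑ i ∈ Finset.range (n+1),
              C (Polynomial.C (n : ℤ) * (Polynomial.C (n : ℤ) + Polynomial.X)) *
                (C (Jc n (i+1)) * X (HVar.b (i+1))) :
              MvPolynomial HVar (Polynomial ℤ))
            = C (Polynomial.C (n : ℤ) * (Polynomial.C (n : ℤ) + Polynomial.X)) *
                ∑ i ∈ Finset.range n, C (Jc n (i+1)) * X (HVar.b (i+1)) := by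
          rw [← Finset.mul_sum, Finset.sum_range_succ,
            Jc_eq_zero_of_lt n (n+1) (by omega)]
          simp
        rw [hA, hB]
        ring
      rw [key]
      simp only [smul_eq_mul]
      have hc : (((n+1 : ℕ) : Polynomial ℤ) - 1) = Polynomial.C (n : ℤ) := by
        push_cast [Polynomial.C_eq_natCast]
        ring
      rw [hc, map_mul, map_add]
      ring
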